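/- For formulas φ_1,…,φ_n, ψ of arrow update model logic and any agent a, the equivalence ⟨↑⟩(⋀_{i=1}^n ◇_a φ_i ∧ □_a ψ) ↔ ⋀_{i=1}^n ◇_a⟨↑⟩(φ_i ∧ ψ) is valid. -/

import Mathlib

namespace AAUML

/-- Formulas of arbitrary arrow update model logic over atoms `P` and agents `A`.
An arrow update model is encoded as a finite list of arrows
`(agent, source outcome, source condition, target outcome, target condition)`,
with outcomes drawn from `ℕ`; `upd U o φ` is `[U,o]φ` and `all φ` is `[↑]φ`. -/
inductive Form (P A : Type) : Type where
  | atom : P → Form P A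
  | neg  : Form P A → Form P A
  | and  : Form P A → Form P A → Form P A
  | box  : A → Form P A → Form P A
  | upd  : List (A × ℕ × Form P A × ℕ × Form P A) → ℕ → Form P A → Form P A
  | all  : Form P A → Form P A

/-- An arrow: agent, source outcome, source condition, target outcome, target condition. -/
abbrev Arrow (P A : Type) := A × ℕ × Form P A × ℕ × Form P A

/-- Formulas of basic multi-agent modal logic: no update modality, no quantifier. -/
inductive Form.Modal {P A : Type} : Form P A → Prop
  | atom (p : P) : Form.Modal (.atom p)
  | neg {φ : Form P A} : Form.Modal φ → Form.Modal (.neg φ)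
  | and {φ ψ : Form P A} : Form.Modal φ → Form.Modal ψ → Form.Modal (.and φ ψ)
  | box (a : A) {φ : Form P A} : Form.Modal φ → Form.Modal (.box a φ)

/-- Formulas of arrow update model logic (no arbitrary-update quantifier anywhere,
including inside the conditions of arrow update models). -/
inductive Form.NoQuant {P A : Type} : Form P A → Prop
  | atom (p : P) : Form.NoQuant (.atom p)
  | neg {φ : Form P A} : Form.NoQuant φ → Form.NoQuant (.neg φ)
  | and {φ ψ : Form P A} : Form.NoQuant φ → Form.NoQuant ψ → Form.NoQuant (.and φ ψ)
  | box (a : A) {φ : Form P A} : Form.NoQuant φ → Form.NoQuant (.box a φ)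
  | upd {U : List (Arrow P A)} (o : ℕ) {φ : Form P A} : Form.NoQuant φ →
      (∀ ar ∈ U, Form.NoQuant ar.2.2.1) → (∀ ar ∈ U, Form.NoQuant ar.2.2.2.2) →
      Form.NoQuant (.upd U o φ)

/-- Propositional formulas (no modalities at all). -/
inductive Form.Prp {P A : Type} : Form P A → Prop
  | atom (p : P) : Form.Prp (.atom p)
  | neg {φ : Form P A} : Form.Prp φ → Form.Prp (.neg φ)
  | and {φ ψ : Form P A} : Form.Prp φ → Form.Prp ψ → Form.Prp (.and φ ψ)

/-- A relational (Kripke) model. -/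
structure KModel (P A : Type) : Type 1 where
  World : Type
  R : A → World → World → Prop
  V : World → P → Prop

variable {P A : Type}

/-- Satisfaction for basic modal formulas (junk value `False` on updates/quantifiers;
only used on modal formulas). -/
def msat (M : KModel P A) : M.World → Form P A → Prop
  | s, .atom p => M.V s p
  | s, .neg φ => ¬ msat M s φ
  | s, .and φ ψ => msat M s φ ∧ msat M s ψ
  | s, .box a φ => ∀ t, M.R a s t → msat M t φ
  | _, .upd _ _ _ => False
  | _, .all _ => False

/-- Some arrow of `U` for agent `a` from outcome `o` to outcome `o'` has its (modal)
source condition true at `s` and its target condition true at `s'`. -/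
def marrowOK (M : KModel P A) (U : List (Arrow P A)) (a : A) (o o' : ℕ)
    (s s' : M.World) : Prop :=
  ∃ ψ ψ', (a, o, ψ, o', ψ') ∈ U ∧ msat M s ψ ∧ msat M s' ψ'

/-- All source and target conditions of `U` are basic modal formulas. -/
def ModalArrows (U : List (Arrow P A)) : Prop :=
  ∀ ar ∈ U, Form.Modal ar.2.2.1 ∧ Form.Modal ar.2.2.2.2

mutual
  /-- Satisfaction `M,s ⊨ φ`.  The case `upd U o φ` is interpreted in the product
  model `M*U` (inlined); `all φ` quantifies over all arrow update models with basic
  modal source and target conditions. -/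
  def Form.sat : (M : KModel P A) → M.World → Form P A → Prop
    | M, s, .atom p => M.V s p
    | M, s, .neg φ => ¬ Form.sat M s φ
    | M, s, .and φ ψ => Form.sat M s φ ∧ Form.sat M s ψ
    | M, s, .box a φ => ∀ t, M.R a s t → Form.sat M t φ
    | M, s, .upd U o φ =>
        Form.sat ⟨M.World × ℕ,
          fun a x y => M.R a x.1 y.1 ∧ satList M U a x.2 y.2 x.1 y.1,
          fun x p => M.V x.1 p⟩ (s, o) φ
    | M, s, .all φ => ∀ (U : List (Arrow P A)) (o : ℕ), ModalArrows U →
        Form.sat ⟨M.World × ℕ,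
          fun a x y => M.R a x.1 y.1 ∧ marrowOK M U a x.2 y.2 x.1 y.1,
          fun x p => M.V x.1 p⟩ (s, o) φ
  termination_by M s φ => sizeOf φ

  /-- Some arrow of the list, for agent `a`, from `o` to `o'`, has its source condition
  true at `s` and its target condition true at `s'`. -/
  def satList : (M : KModel P A) → List (Arrow P A) → A → ℕ → ℕ → M.World → M.World → Prop
    | _, [], _, _, _, _, _ => False
    | M, (b, o1, ψ, o2, ψ') :: rest, a, o, o', s, s' =>
        (b = a ∧ o1 = o ∧ o2 = o' ∧ Form.sat M s ψ ∧ Form.sat M s' ψ') ∨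
        satList M rest a o o' s s'
  termination_by M U a o o' s s' => sizeOf U
end

/-- The product `M*U` of a relational model and an arrow update model. -/
def prodModel (M : KModel P A) (U : List (Arrow P A)) : KModel P A :=
  ⟨M.World × ℕ,
   fun a x y => M.R a x.1 y.1 ∧ satList M U a x.2 y.2 x.1 y.1,
   fun x p => M.V x.1 p⟩

def Valid (φ : Form P A) : Prop := ∀ (M : KModel P A) (s : M.World), Form.sat M s φ

def Form.or (φ ψ : Form P A) : Form P A := .neg (.and (.neg φ) (.neg ψ))
def Form.imp (φ ψ : Form P A) : Form P A := .neg (.and φ (.neg ψ))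
def Form.dia (a : A) (φ : Form P A) : Form P A := .neg (.box a (.neg φ))
/-- `⟨U,o⟩φ` -/
def Form.diaUpd (U : List (Arrow P A)) (o : ℕ) (φ : Form P A) : Form P A :=
  .neg (.upd U o (.neg φ))
/-- `⟨↑⟩φ` -/
def Form.ex (φ : Form P A) : Form P A := .neg (.all (.neg φ))
/-- A canonical tautology. -/
def Form.top [Inhabited P] : Form P A := .neg (.and (.atom default) (.neg (.atom default)))
/-- Finite conjunction. -/
def Form.conj [Inhabited P] : List (Form P A) → Form P A
  | [] => Form.top
  | φ :: rest => .and φ (Form.conj rest)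

/-- `Z` is a bisimulation between `M` and `N`. -/
def IsBisim (M N : KModel P A) (Z : M.World → N.World → Prop) : Prop :=
  ∀ s s', Z s s' →
    (∀ p, M.V s p ↔ N.V s' p) ∧
    (∀ a t, M.R a s t → ∃ t', N.R a s' t' ∧ Z t t') ∧
    (∀ a t', N.R a s' t' → ∃ t, M.R a s t ∧ Z t t')

/-- Bisimilarity of pointed models. -/
def Bisimilar (M : KModel P A) (s : M.World) (N : KModel P A) (s' : N.World) : Prop :=
  ∃ Z, IsBisim M N Z ∧ Z s s'

/-- An action model: actions with accessibility relations and preconditions. -/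
structure AModel (P A : Type) : Type 1 where
  Action : Type
  rel : A → Action → Action → Prop
  pre : Action → Form P A

/-- The restricted modal product `M ⊗ E`. -/
def actProd (M : KModel P A) (E : AModel P A) : KModel P A :=
  ⟨{x : M.World × E.Action // Form.sat M x.1 (E.pre x.2)},
   fun a x y => M.R a x.1.1 y.1.1 ∧ E.rel a x.1.2 y.1.2,
   fun x p => M.V x.1.1 p⟩

/-- `M,s ⊨ [E,e]φ`: if the precondition of `e` holds at `s` then `φ` holds at `(s,e)`
in `M ⊗ E`. -/
def actSat (M : KModel P A) (E : AModel P A) (s : M.World) (e : E.Action)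
    (φ : Form P A) : Prop :=
  ∀ h : Form.sat M s (E.pre e), Form.sat (actProd M E) ⟨(s, e), h⟩ φ

section Aux
variable {P A : Type}

/-- The marrowOK product model. -/
@[reducible]
def Mm (M : KModel P A) (U : List (Arrow P A)) : KModel P A :=
  ⟨M.World × ℕ,
   fun a x y => M.R a x.1 y.1 ∧ marrowOK M U a x.2 y.2 x.1 y.1,
   fun x p => M.V x.1 p⟩

lemma sat_atom {M : KModel P A} {s : M.World} {p : P} :
    Form.sat M s (.atom p) ↔ M.V s p := by simp [Form.sat]

lemma sat_neg {M : KModel P A} {s : M.World} {φ : Form P A} :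
    Form.sat M s (.neg φ) ↔ ¬ Form.sat M s φ := by simp [Form.sat]

lemma sat_and {M : KModel P A} {s : M.World} {φ χ : Form P A} :
    Form.sat M s (.and φ χ) ↔ Form.sat M s φ ∧ Form.sat M s χ := by simp [Form.sat]

lemma sat_box {M : KModel P A} {s : M.World} {a : A} {φ : Form P A} :
    Form.sat M s (.box a φ) ↔ ∀ t, M.R a s t → Form.sat M t φ := by simp [Form.sat]

lemma sat_upd {M : KModel P A} {s : M.World} {U : List (Arrow P A)} {o : ℕ} {φ : Form P A} :
    Form.sat M s (.upd U o φ) ↔ Form.sat (prodModel M U) (s, o) φ := by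
  simp [Form.sat, prodModel]

lemma sat_all {M : KModel P A} {s : M.World} {φ : Form P A} :
    Form.sat M s (.all φ) ↔ ∀ U o, ModalArrows U → Form.sat (Mm M U) (s, o) φ := by
  simp [Form.sat, Mm]

end Aux
section Aux2
variable {P A : Type}

lemma sat_dia {M : KModel P A} {s : M.World} {a : A} {φ : Form P A} :
    Form.sat M s (Form.dia a φ) ↔ ∃ t, M.R a s t ∧ Form.sat M t φ := by
  simp only [Form.dia, sat_neg, sat_box, sat_neg]
  push_neg
  rfl

lemma sat_ex {M : KModel P A} {s : M.World} {φ : Form P A} :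
    Form.sat M s (Form.ex φ) ↔ ∃ U o, ModalArrows U ∧ Form.sat (Mm M U) (s, o) φ := by
  simp only [Form.ex, sat_neg, sat_all, sat_neg]
  push_neg
  rfl

lemma sat_top [Inhabited P] {M : KModel P A} {s : M.World} :
    Form.sat M s (Form.top : Form P A) := by
  simp [Form.top, sat_neg, sat_and]

lemma sat_imp {M : KModel P A} {s : M.World} {φ χ : Form P A} :
    Form.sat M s (Form.imp φ χ) ↔ (Form.sat M s φ → Form.sat M s χ) := by
  simp only [Form.imp, sat_neg, sat_and]
  tauto

lemma sat_conj [Inhabited P] {M : KModel P A} {s : M.World} {l : List (Form P A)} :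
    Form.sat M s (Form.conj l) ↔ ∀ χ ∈ l, Form.sat M s χ := by
  induction l with
  | nil => simp [Form.conj, sat_top]
  | cons φ rest ih => simp [Form.conj, sat_and, ih]

lemma msat_top [Inhabited P] {M : KModel P A} {s : M.World} :
    msat M s (Form.top : Form P A) := by
  simp [Form.top, msat]

lemma msat_imp {M : KModel P A} {s : M.World} {φ χ : Form P A} :
    msat M s (Form.imp φ χ) ↔ (msat M s φ → msat M s χ) := by
  simp only [Form.imp, msat]
  tauto

lemma msat_conj [Inhabited P] {M : KModel P A} {s : M.World} {l : List (Form P A)} :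
    msat M s (Form.conj l) ↔ ∀ χ ∈ l, msat M s χ := by
  induction l with
  | nil => simp [Form.conj, msat_top]
  | cons φ rest ih => simp [Form.conj, msat, ih]

lemma modal_top [Inhabited P] : (Form.top : Form P A).Modal := by
  unfold Form.top
  exact .neg (.and (.atom _) (.neg (.atom _)))

lemma modal_imp {φ χ : Form P A} (h1 : φ.Modal) (h2 : χ.Modal) : (Form.imp φ χ).Modal :=
  .neg (.and h1 (.neg h2))

lemma modal_conj [Inhabited P] {l : List (Form P A)} (h : ∀ χ ∈ l, Form.Modal χ) :
    (Form.conj l).Modal := by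
  induction l with
  | nil => exact modal_top
  | cons φ rest ih =>
      exact .and (h _ (by simp)) (ih fun χ hχ => h _ (by simp [hχ]))

/-- sat and msat agree on modal formulas. -/
lemma sat_iff_msat {φ : Form P A} (h : φ.Modal) :
    ∀ (M : KModel P A) (s : M.World), Form.sat M s φ ↔ msat M s φ := by
  induction h with
  | atom p => intro M s; simp [Form.sat, msat]
  | neg _ ih => intro M s; simp [sat_neg, msat, ih]
  | and _ _ ih1 ih2 => intro M s; simp [sat_and, msat, ih1, ih2]
  | box a _ ih => intro M s; simp [sat_box, msat, ih]

open Classical in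
/-- Reduction of `[U,o]φ` for modal `φ` to a modal formula. -/
noncomputable def red [Inhabited P] (U : List (Arrow P A)) : Form P A → ℕ → Form P A
  | .atom p, _ => .atom p
  | .neg φ, o => .neg (red U φ o)
  | .and φ χ, o => .and (red U φ o) (red U χ o)
  | .box a φ, o => Form.conj (U.map fun ar =>
      if ar.1 = a ∧ ar.2.1 = o then
        Form.imp ar.2.2.1 (.box a (Form.imp ar.2.2.2.2 (red U φ ar.2.2.2.1)))
      else Form.top)
  | .upd _ _ _, _ => Form.top
  | .all _, _ => Form.top

lemma red_modal [Inhabited P] {U : List (Arrow P A)} (hU : ModalArrows U) {φ : Form P A}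
    (h : φ.Modal) : ∀ o, (red U φ o).Modal := by
  induction h with
  | atom p => intro o; exact .atom p
  | neg _ ih => intro o; exact .neg (ih o)
  | and _ _ ih1 ih2 => intro o; exact .and (ih1 o) (ih2 o)
  | box a _ ih =>
      intro o
      apply modal_conj
      intro χ hχ
      simp only [List.mem_map] at hχ
      obtain ⟨ar, har, rfl⟩ := hχ
      split
      · exact modal_imp (hU ar har).1 (.box a (modal_imp (hU ar har).2 (ih _)))
      · exact modal_top

lemma red_correct [Inhabited P] {U : List (Arrow P A)} (M : KModel P A) {φ : Form P A}
    (h : φ.Modal) : ∀ o s, msat M s (red U φ o) ↔ msat (Mm M U) (s, o) φ := by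
  induction h with
  | atom p => intro o s; simp [red, msat, Mm]
  | neg _ ih => intro o s; simp [red, msat, ih]
  | and _ _ ih1 ih2 => intro o s; simp [red, msat, ih1, ih2]
  | box a φm ih =>
      intro o s
      simp only [red, msat_conj, List.mem_map]
      constructor
      · rintro H ⟨t, o2⟩ ⟨hR, ψ1, ψ2, hmem, h1, h2⟩
        have := H _ ⟨(a, o, ψ1, o2, ψ2), hmem, rfl⟩
        rw [if_pos ⟨rfl, rfl⟩] at this
        rw [msat_imp] at this
        have := this h1 t hR
        rw [msat_imp] at this
        exact (ih o2 t).mp (this h2)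
      · rintro H χ ⟨ar, har, rfl⟩
        split
        · rename_i hc
          obtain ⟨b, o1, ψ1, o2, ψ2⟩ := ar
          obtain ⟨hb, ho⟩ := hc
          simp only at hb ho
          subst hb; subst ho
          rw [msat_imp]
          intro h1 t hR
          rw [msat_imp]
          intro h2
          exact (ih o2 t).mpr (H (t, o2) ⟨hR, ψ1, ψ2, har, h1, h2⟩)
        · exact msat_top

end Aux2
section Aux3
variable {P A : Type}

lemma satList_iff {M : KModel P A} {a : A} {o o' : ℕ} {s t : M.World} :
    ∀ {U : List (Arrow P A)}, satList M U a o o' s t ↔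
      ∃ ψ ψ', (a, o, ψ, o', ψ') ∈ U ∧ Form.sat M s ψ ∧ Form.sat M t ψ' := by
  intro U
  induction U with
  | nil => simp [satList]
  | cons ar rest ih =>
      obtain ⟨b, o1, ψ1, o2, ψ2⟩ := ar
      simp only [satList, ih, List.mem_cons]
      constructor
      · rintro (⟨rfl, rfl, rfl, h1, h2⟩ | ⟨ψ, ψ', hm, h1, h2⟩)
        · exact ⟨ψ1, ψ2, Or.inl rfl, h1, h2⟩
        · exact ⟨ψ, ψ', Or.inr hm, h1, h2⟩
      · rintro ⟨ψ, ψ', (heq | hm), h1, h2⟩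
        · simp only [Prod.mk.injEq] at heq
          obtain ⟨rfl, rfl, rfl, rfl, rfl⟩ := heq
          exact Or.inl ⟨rfl, rfl, rfl, h1, h2⟩
        · exact Or.inr ⟨ψ, ψ', hm, h1, h2⟩

/-- If the satList relation over `U` matches the marrowOK relation over `U'`,
updating by `U` is evaluating in `Mm M U'`. -/
lemma sat_upd_Mm {M : KModel P A} {U U' : List (Arrow P A)} {o : ℕ} {φ : Form P A}
    {s : M.World}
    (h : ∀ a o1 o2 (x y : M.World),
      satList M U a o1 o2 x y ↔ marrowOK M U' a o1 o2 x y) :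
    Form.sat M s (.upd U o φ) ↔ Form.sat (Mm M U') (s, o) φ := by
  rw [sat_upd]
  unfold prodModel Mm
  have hR : (fun a (x y : M.World × ℕ) => M.R a x.1 y.1 ∧ satList M U a x.2 y.2 x.1 y.1)
      = (fun a (x y : M.World × ℕ) => M.R a x.1 y.1 ∧ marrowOK M U' a x.2 y.2 x.1 y.1) := by
    funext a x y
    exact propext (and_congr_right fun _ => h _ _ _ _ _)
  rw [hR]

/-- Every NoQuant formula is equivalent to a modal formula. -/
theorem reduceNoQuant [Inhabited P] {φ : Form P A} (h : φ.NoQuant) :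
    ∃ φ' : Form P A, φ'.Modal ∧ ∀ (M : KModel P A) (s : M.World),
      Form.sat M s φ ↔ msat M s φ' := by
  induction h with
  | atom p => exact ⟨.atom p, .atom p, fun M s => by simp [Form.sat, msat]⟩
  | neg _ ih =>
      obtain ⟨φ', hm, he⟩ := ih
      exact ⟨.neg φ', .neg hm, fun M s => by simp [sat_neg, msat, he]⟩
  | and _ _ ih1 ih2 =>
      obtain ⟨φ1, hm1, he1⟩ := ih1
      obtain ⟨φ2, hm2, he2⟩ := ih2
      exact ⟨.and φ1 φ2, .and hm1 hm2, fun M s => by simp [sat_and, msat, he1, he2]⟩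
  | box a _ ih =>
      obtain ⟨φ', hm, he⟩ := ih
      exact ⟨.box a φ', .box a hm, fun M s => by simp [sat_box, msat, he]⟩
  | @upd U o φ _ _ _ ihφ ih1 ih2 =>
      obtain ⟨φ', hm, he⟩ := ihφ
      classical
      choose f1 hf1m hf1 using fun ar (h : ar ∈ U) => ih1 ar h
      choose f2 hf2m hf2 using fun ar (h : ar ∈ U) => ih2 ar h
      let g : Arrow P A → Arrow P A := fun ar =>
        if h : ar ∈ U then (ar.1, ar.2.1, f1 ar h, ar.2.2.2.1, f2 ar h) else ar
      let U' := U.map g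
      have hU' : ModalArrows U' := by
        rintro ar' har'
        simp only [U', List.mem_map] at har'
        obtain ⟨ar, har, rfl⟩ := har'
        simp only [g, dif_pos har]
        exact ⟨hf1m ar har, hf2m ar har⟩
      refine ⟨red U' φ' o, red_modal hU' hm o, fun M s => ?_⟩
      rw [red_correct M hm o s]
      rw [sat_upd_Mm (U' := U') ?_]
      · exact he (Mm M U') (s, o)
      · intro a o1 o2 x y
        rw [satList_iff]
        constructor
        · rintro ⟨ψ, ψ', hmem, h1, h2⟩
          refine ⟨f1 _ hmem, f2 _ hmem, ?_, ?_, ?_⟩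
          · simp only [U', List.mem_map]
            exact ⟨_, hmem, by simp [g, dif_pos hmem]⟩
          · exact (hf1 _ hmem M x).mp h1
          · exact (hf2 _ hmem M y).mp h2
        · rintro ⟨ψ, ψ', hmem, h1, h2⟩
          simp only [U', List.mem_map] at hmem
          obtain ⟨ar, har, heq⟩ := hmem
          simp only [g, dif_pos har] at heq
          obtain ⟨b, oo1, c1, oo2, c2⟩ := ar
          simp only [Prod.mk.injEq] at heq
          obtain ⟨rfl, rfl, rfl, rfl, rfl⟩ := heq
          exact ⟨_, _, har, (hf1 _ har M x).mpr h1, (hf2 _ har M y).mpr h2⟩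

/-- msat is invariant under bisimulation for modal formulas. -/
lemma msat_bisim {M N : KModel P A} {Z : M.World → N.World → Prop}
    (hZ : IsBisim M N Z) {φ : Form P A} (h : φ.Modal) :
    ∀ s s', Z s s' → (msat M s φ ↔ msat N s' φ) := by
  induction h with
  | atom p => intro s s' hz; exact (hZ s s' hz).1 p
  | neg _ ih => intro s s' hz; simp [msat, ih s s' hz]
  | and _ _ ih1 ih2 => intro s s' hz; simp [msat, ih1 s s' hz, ih2 s s' hz]
  | box a _ ih =>
      intro s s' hz
      simp only [msat]
      constructor
      · intro H t' hR
        obtain ⟨t, hRt, hzt⟩ := (hZ s s' hz).2.2 a t' hR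
        exact (ih t t' hzt).mp (H t hRt)
      · intro H t hR
        obtain ⟨t', hRt, hzt⟩ := (hZ s s' hz).2.1 a t hR
        exact (ih t t' hzt).mpr (H t' hRt)

end Aux3

/-- for formulas `φ₁,…,φₙ,ψ` of arrow update model logic,
`⟨↑⟩(⋀ᵢ ◇_a φᵢ ∧ □_a ψ) ↔ ⋀ᵢ ◇_a⟨↑⟩(φᵢ ∧ ψ)` is valid. -/
theorem ex_conj_dia_box (P A : Type) [Inhabited P] (a : A)
    (φs : List (Form P A)) (ψ : Form P A)
    (hφ : ∀ φ ∈ φs, φ.NoQuant) (hψ : ψ.NoQuant) :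
    ∀ (M : KModel P A) (s : M.World),
      Form.sat M s (Form.ex (.and (Form.conj (φs.map (Form.dia a))) (.box a ψ))) ↔
        Form.sat M s (Form.conj (φs.map (fun φ => Form.dia a (Form.ex (.and φ ψ))))) := by
  intro M s
  rw [sat_ex, sat_conj]
  constructor
  · rintro ⟨U, o, hMA, hsat⟩
    rw [sat_and, sat_conj, sat_box] at hsat
    obtain ⟨hconj, hbox⟩ := hsat
    intro ξ hξ
    simp only [List.mem_map] at hξ
    obtain ⟨φ, hφmem, rfl⟩ := hξ
    have hd := hconj (Form.dia a φ) (by simp only [List.mem_map]; exact ⟨φ, hφmem, rfl⟩)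
    rw [sat_dia] at hd
    obtain ⟨t, hR, hφt⟩ := hd
    rw [sat_dia]
    refine ⟨t.1, hR.1, ?_⟩
    rw [sat_ex]
    refine ⟨U, t.2, hMA, ?_⟩
    rw [sat_and]
    exact ⟨hφt, hbox t hR⟩
  · intro H
    classical
    have H' : ∀ i : Fin φs.length, ∃ t, M.R a s t ∧ ∃ U o, ModalArrows U ∧
        Form.sat (Mm M U) (t, o) (.and (φs.get i) ψ) := by
      intro i
      have hd := H (Form.dia a (Form.ex (.and (φs.get i) ψ)))
        (by simp only [List.mem_map]; exact ⟨φs.get i, φs.get_mem i, rfl⟩)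
      rw [sat_dia] at hd
      obtain ⟨t, hR, ht⟩ := hd
      rw [sat_ex] at ht
      obtain ⟨U, o, hMA, hsat⟩ := ht
      exact ⟨t, hR, U, o, hMA, hsat⟩
    choose tt hRt Uf of hMAf hsatf using H'
    have hNQ : ∀ i : Fin φs.length, (Form.and (φs.get i) ψ).NoQuant :=
      fun i => .and (hφ _ (φs.get_mem i)) hψ
    choose χ hχm hχ using fun i => reduceNoQuant (hNQ i)
    let θ : Fin φs.length → Form P A := fun i => red (Uf i) (χ i) (of i)
    have hθm : ∀ i, (θ i).Modal := fun i => red_modal (hMAf i) (hχm i) (of i)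
    have hθ : ∀ (i : Fin φs.length) (t : M.World), msat M t (θ i) ↔
        Form.sat (Mm M (Uf i)) (t, of i) (.and (φs.get i) ψ) := by
      intro i t
      rw [show θ i = red (Uf i) (χ i) (of i) from rfl,
        red_correct M (hχm i) (of i) t]
      exact (hχ i (Mm M (Uf i)) (t, of i)).symm
    let fresh : ℕ := Nat.pair 0 0
    let enc : Fin φs.length → ℕ → ℕ := fun i o => Nat.pair (i.1 + 1) o
    let rn : Fin φs.length → Arrow P A → Arrow P A := fun i ar =>
      (ar.1, enc i ar.2.1, ar.2.2.1, enc i ar.2.2.2.1, ar.2.2.2.2)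
    let U : List (Arrow P A) :=
      ((List.finRange φs.length).map fun i =>
        (a, fresh, (Form.top : Form P A), enc i (of i), θ i))
      ++ ((List.finRange φs.length).flatMap fun i => (Uf i).map (rn i))
    have hmemU : ∀ ar : Arrow P A, ar ∈ U ↔
        ((∃ i : Fin φs.length, (a, fresh, (Form.top : Form P A), enc i (of i), θ i) = ar) ∨
         (∃ i : Fin φs.length, ∃ b ∈ Uf i, rn i b = ar)) := by
      intro ar
      constructor
      · intro h
        rcases List.mem_append.mp h with h | h
        · obtain ⟨i, -, heq⟩ := List.mem_map.mp h
          exact Or.inl ⟨i, heq⟩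
        · obtain ⟨i, -, hmem⟩ := List.mem_flatMap.mp h
          obtain ⟨b, hb, heq⟩ := List.mem_map.mp hmem
          exact Or.inr ⟨i, b, hb, heq⟩
      · rintro (⟨i, heq⟩ | ⟨i, b, hb, heq⟩)
        · exact List.mem_append.mpr (Or.inl (List.mem_map.mpr
            ⟨i, List.mem_finRange i, heq⟩))
        · exact List.mem_append.mpr (Or.inr (List.mem_flatMap.mpr
            ⟨i, List.mem_finRange i, List.mem_map.mpr ⟨b, hb, heq⟩⟩))
    have hMAU : ModalArrows U := by
      intro ar har
      rw [hmemU] at har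
      rcases har with ⟨i, heq⟩ | ⟨i, b, hb, heq⟩
      · rw [← heq]; exact ⟨modal_top, hθm i⟩
      · rw [← heq]; exact ⟨(hMAf i b hb).1, (hMAf i b hb).2⟩
    have hbis : ∀ i : Fin φs.length, IsBisim (Mm M U) (Mm M (Uf i))
        (fun x y => x.1 = y.1 ∧ x.2 = enc i y.2) := by
      intro i
      rintro ⟨x, xo⟩ ⟨y, yo⟩ ⟨hxy, hox⟩
      simp only at hxy hox
      subst hxy; subst hox
      refine ⟨fun p => Iff.rfl, ?_, ?_⟩
      · rintro b ⟨w, wo⟩ ⟨hR, ψ1, ψ2, hmem, h1, h2⟩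
        rw [hmemU] at hmem
        rcases hmem with ⟨j, hj⟩ | ⟨j, ar, har, hj⟩
        · exfalso
          have hsrc : fresh = enc i yo := by
            have := congrArg (fun ar : Arrow P A => ar.2.1) hj
            simpa using this
          simp only [enc, fresh] at hsrc
          have := (Nat.pair_eq_pair.mp hsrc).1
          omega
        · obtain ⟨c, o1, χ1, o2, χ2⟩ := ar
          simp only [rn, Prod.mk.injEq, enc] at hj
          obtain ⟨rfl, h21, rfl, h22, rfl⟩ := hj
          have hji : j = i := by
            have := (Nat.pair_eq_pair.mp h21).1
            exact Fin.ext (by omega)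
          subst hji
          have ho1 : o1 = yo := (Nat.pair_eq_pair.mp h21).2
          subst ho1
          exact ⟨(w, o2), ⟨hR, χ1, χ2, har, h1, h2⟩, rfl, h22.symm⟩
      · rintro b ⟨w, wo⟩ ⟨hR, ψ1, ψ2, hmem, h1, h2⟩
        refine ⟨(w, enc i wo), ⟨hR, ψ1, ψ2, ?_, h1, h2⟩, rfl, rfl⟩
        rw [hmemU]
        exact Or.inr ⟨i, (b, yo, ψ1, wo, ψ2), hmem, rfl⟩
    have htrans : ∀ (i : Fin φs.length) (w : M.World) (o2 : ℕ),
        Form.sat (Mm M U) (w, enc i o2) (.and (φs.get i) ψ) ↔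
          Form.sat (Mm M (Uf i)) (w, o2) (.and (φs.get i) ψ) := by
      intro i w o2
      rw [hχ i (Mm M U) _, hχ i (Mm M (Uf i)) _]
      exact msat_bisim (hbis i) (hχm i) (w, enc i o2) (w, o2) ⟨rfl, rfl⟩
    refine ⟨U, fresh, hMAU, ?_⟩
    rw [sat_and]
    constructor
    · rw [sat_conj]
      intro ξ hξ
      simp only [List.mem_map] at hξ
      obtain ⟨φ, hφmem, rfl⟩ := hξ
      obtain ⟨i, rfl⟩ := List.mem_iff_get.mp hφmem
      rw [sat_dia]
      refine ⟨(tt i, enc i (of i)),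
        ⟨hRt i, Form.top, θ i, ?_, msat_top, ?_⟩, ?_⟩
      · rw [hmemU]; exact Or.inl ⟨i, rfl⟩
      · exact (hθ i (tt i)).mpr (hsatf i)
      · exact (sat_and.mp ((htrans i (tt i) (of i)).mpr (hsatf i))).1
    · rw [sat_box]
      rintro ⟨w, wo⟩ ⟨hR, ψ1, ψ2, hmem, h1, h2⟩
      rw [hmemU] at hmem
      rcases hmem with ⟨i, hi⟩ | ⟨i, ar, har, hi⟩
      · simp only [Prod.mk.injEq] at hi
        obtain ⟨-, -, rfl, rfl, rfl⟩ := hi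
        have hw := (hθ i w).mp h2
        have hw2 := (htrans i w (of i)).mpr hw
        exact (sat_and.mp hw2).2
      · exfalso
        obtain ⟨c, o1, χ1, o2, χ2⟩ := ar
        simp only [rn, Prod.mk.injEq, enc, fresh] at hi
        have := (Nat.pair_eq_pair.mp hi.2.1).1
        omega

end AAUML
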